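/- Let K be an n×n substochastic matrix partitioned in blocks according to a partition {S₁,…,S_k} of {1,…,n}, with zero diagonal blocks, and let L' be the block-diagonal part of an invertible matrix L (generator), with V = (−L)^{−1}. If each block −L|_{S_i×S_i} is invertible with inverse V^{S_i}, and H_{i,j} = V^{S_i} L|_{S_i×S_j} for i ≠ j, then det(−L')⁻¹ det(−L) = det(I − K), where K is the block matrix with off-diagonal blocks H_{i,j} and zero diagonal blocks. -/

import Mathlib

open Matrix

private lemma sum_restrict {n k : ℕ} (π : Fin n → Fin k) (i : Fin k) (f : Fin n → ℝ)
    (hf : ∀ z, π z ≠ i → f z = 0) :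
    ∑ z, f z = ∑ z : {z // π z = i}, f z := by
  rw [← Finset.sum_subtype (Finset.univ.filter (fun z => π z = i)) (by simp) f]
  exact (Finset.sum_filter_of_ne (fun z _ h => by by_contra hc; exact h (hf z hc))).symm

private lemma cast_val {n k : ℕ} {π : Fin n → Fin k} {i j : Fin k} (h : i = j)
    (a : {z // π z = i}) :
    ((cast (congrArg (fun t => {z // π z = t}) h) a : {z // π z = j}) : Fin n) = a.val := by
  cases h; rfl

/-- Block determinant identity for the hitting-probability matrix: let `π` assign each
state to a block, `L'` the block-diagonal part of the invertible generator `L`, each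
diagonal block of `-L` invertible, and `K` the matrix with zero diagonal blocks and
off-diagonal blocks `H_{i,j} = V^{S_i} L|_{S_i × S_j}` (i.e. `K = (-L')⁻¹ L` off the
diagonal blocks). Then `det(-L')⁻¹ det(-L) = det(I - K)`. -/
theorem stmt16 {n k : ℕ} (π : Fin n → Fin k) (L : Matrix (Fin n) (Fin n) ℝ)
    (hL : IsUnit L.det)
    (L' : Matrix (Fin n) (Fin n) ℝ)
    (hL' : ∀ x y, L' x y = if π x = π y then L x y else 0)
    (hblocks : ∀ i : Fin k,
      IsUnit (((-L).submatrix (Subtype.val : {x // π x = i} → Fin n)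
        (Subtype.val : {x // π x = i} → Fin n)).det))
    (K : Matrix (Fin n) (Fin n) ℝ)
    (hK : ∀ x y, K x y = if π x = π y then 0 else ((-L')⁻¹ * L) x y) :
    ((-L').det)⁻¹ * (-L).det = (1 - K).det := by
  classical
  set B : (i : Fin k) → Matrix {x // π x = i} {x // π x = i} ℝ := fun i =>
    (-L).submatrix Subtype.val Subtype.val with hBdef
  set e : (Σ i : Fin k, {x // π x = i}) ≃ Fin n := Equiv.sigmaFiberEquiv π with he
  set D : Matrix (Σ i : Fin k, {x // π x = i}) (Σ i : Fin k, {x // π x = i}) ℝ :=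
    blockDiagonal' B with hD
  have hnL' : ∀ x z : Fin n, (-L') x z = if π x = π z then (-L) x z else 0 := by
    intro x z
    simp only [Matrix.neg_apply, hL' x z]
    split <;> simp
  have hesymm : ∀ x : Fin n, e.symm x = ⟨π x, ⟨x, rfl⟩⟩ := fun x => rfl
  -- -L' is the reindexed block diagonal matrix
  have hL'D : -L' = D.submatrix e.symm e.symm := by
    ext x y
    rw [hnL', submatrix_apply, hesymm, hesymm, hD, blockDiagonal'_apply]
    by_cases h : π x = π y
    · rw [if_pos h, dif_pos h]
      simp only [hBdef, submatrix_apply]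
      exact congrArg ((-L) x) (cast_val h.symm ⟨y, rfl⟩).symm
    · rw [if_neg h, dif_neg h]
  have hDD' : D * blockDiagonal' (fun i => (B i)⁻¹) = 1 := by
    rw [hD, ← blockDiagonal'_mul]
    have : (fun i => B i * (B i)⁻¹) = fun i : Fin k => (1 : Matrix {x // π x = i} _ ℝ) := by
      funext i
      exact mul_nonsing_inv _ (hblocks i)
    rw [this]
    exact blockDiagonal'_one
  have hdetD : IsUnit D.det := isUnit_det_of_right_inverse hDD'
  have hdetL' : (-L').det = D.det := by
    rw [hL'D, det_submatrix_equiv_self]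
  have hunitL' : IsUnit (-L').det := hdetL' ▸ hdetD
  -- inverse of D is block diagonal of inverses
  have hDinv : D⁻¹ = blockDiagonal' (fun i => (B i)⁻¹) := inv_eq_right_inv hDD'
  have hL'inv : (-L')⁻¹ = D⁻¹.submatrix e.symm e.symm := by
    refine inv_eq_right_inv ?_
    rw [hL'D, submatrix_mul_equiv, mul_nonsing_inv _ hdetD, submatrix_one_equiv]
  have hinv_apply : ∀ x z : Fin n, (-L')⁻¹ x z =
      if h : π x = π z then (B (π x))⁻¹ ⟨x, rfl⟩ ⟨z, h.symm⟩ else 0 := by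
    intro x z
    rw [hL'inv, submatrix_apply, hesymm, hesymm, hDinv, blockDiagonal'_apply]
    by_cases h : π x = π z
    · rw [dif_pos h, dif_pos h]
      exact congrArg ((B (π x))⁻¹ ⟨x, rfl⟩) (Subtype.ext (cast_val h.symm ⟨z, rfl⟩))
    · rw [dif_neg h, dif_neg h]
  -- key identity: (-L')⁻¹ * (-L) = 1 - K
  have hkey : (-L')⁻¹ * (-L) = 1 - K := by
    ext x y
    rw [mul_apply, Matrix.sub_apply, hK]
    by_cases hxy : π x = π y
    · rw [if_pos hxy, sub_zero]
      have hz : ∀ z, π z ≠ π x → (-L')⁻¹ x z * (-L) z y = 0 := by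
        intro z hz
        rw [hinv_apply, dif_neg (fun h => hz h.symm), zero_mul]
      rw [sum_restrict π (π x) _ hz]
      have step : ∀ z : {z // π z = π x}, (-L')⁻¹ x z.1 * (-L) z.1 y =
          (B (π x))⁻¹ ⟨x, rfl⟩ z * B (π x) z ⟨y, hxy.symm⟩ := by
        rintro ⟨z, hzx⟩
        rw [hinv_apply, dif_pos hzx.symm]
        rfl
      rw [Finset.sum_congr rfl (fun z _ => step z), ← mul_apply,
        nonsing_inv_mul _ (hblocks (π x))]
      simp [one_apply, Subtype.ext_iff]
    · rw [if_neg hxy, one_apply_ne (fun h => hxy (by rw [h])), zero_sub]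
      have : ∀ z : Fin n, (-L')⁻¹ x z * (-L) z y = -((-L')⁻¹ x z * L z y) := by
        intro z; simp
      rw [Finset.sum_congr rfl (fun z _ => this z), mul_apply, ← Finset.sum_neg_distrib]
  -- conclude
  rw [← hkey, det_mul, det_nonsing_inv, Ring.inverse_eq_inv']
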